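/- Let S, V, W be states of a medium (S,T) and suppose V = Sm and W = Vn for concise messages m and n, and S = Wp where p is either a concise message for W or the empty message (so that the concatenation mnp is closed for S). Then every token of T occurs at most once in the message mnp; in particular, for each pair {τ, τ̃} of mutually reverse tokens there is at most one occurrence of that pair in mnp. -/

import Mathlib

open scoped Classical symmDiff

universe u

namespace Media

variable {S : Type u}

/-- The state obtained by applying the message (string of tokens) `m` to the state `s`. -/
def apply (s : S) (m : List (S → S)) : S :=
  m.foldl (fun x τ => τ x) s

/-- The sequence of states `S₀ = s, S₁, …, Sₙ` produced by the message `m` from the state `s`. -/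
def produced (s : S) (m : List (S → S)) : List S :=
  m.scanl (fun x τ => τ x) s

/-- `τ'` is a reverse of the token `τ`. -/
def IsReverse (τ τ' : S → S) : Prop :=
  ∀ P Q : S, P ≠ Q → (τ P = Q ↔ τ' Q = P)

/-- The message `m` is stepwise effective for the state `s`. -/
def StepwiseEffective (s : S) (m : List (S → S)) : Prop :=
  List.Chain' (· ≠ ·) (produced s m)

/-- The message `m` is consistent: it does not contain both a token and its reverse. -/
def Consistent (m : List (S → S)) : Prop :=
  ∀ τ ∈ m, ∀ τ' ∈ m, ¬ IsReverse τ τ'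

/-- The message `m` is concise for the state `s`. -/
def Concise (s : S) (m : List (S → S)) : Prop :=
  StepwiseEffective s m ∧ Consistent m ∧ m.Nodup

/-- The message `m` is vacuous: its indices can be partitioned into pairs of
mutually reverse tokens. -/
def Vacuous (m : List (S → S)) : Prop :=
  ∃ f : Fin m.length → Fin m.length, Function.Involutive f ∧
    (∀ i, f i ≠ i) ∧ ∀ i, IsReverse (m.get i) (m.get (f i))

/-- The message `m` is closed for the state `s`. -/
def Closed (s : S) (m : List (S → S)) : Prop :=
  StepwiseEffective s m ∧ apply s m = s

/-- `(S, T)` is a medium: a token system satisfying axioms [M1] and [M2]. -/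
def IsMedium (T : Set (S → S)) : Prop :=
  (∃ a b : S, a ≠ b) ∧ T.Nonempty ∧ (∀ τ ∈ T, τ ≠ id) ∧
  (∀ P Q : S, P ≠ Q →
    ∃ m : List (S → S), (∀ τ ∈ m, τ ∈ T) ∧ Concise P m ∧ apply P m = Q) ∧
  (∀ (P : S) (m : List (S → S)), (∀ τ ∈ m, τ ∈ T) → Closed P m → Vacuous m)

lemma head?_scanl {α β : Type*} (f : β → α → β) (b : β) (l : List α) :
    (List.scanl f b l).head? = some b := by
  cases l <;> simp [List.scanl]

lemma apply_cons (s : S) (τ : S → S) (l : List (S → S)) :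
    apply s (τ :: l) = apply (τ s) l := rfl

lemma se_append {s : S} {m n : List (S → S)} (hm : StepwiseEffective s m)
    (hn : StepwiseEffective (apply s m) n) : StepwiseEffective s (m ++ n) := by
  induction m generalizing s with
  | nil => simpa [apply] using hn
  | cons τ m ih =>
    unfold StepwiseEffective produced at *
    rw [List.cons_append, List.scanl_cons] at *
    rw [List.Chain', List.isChain_cons] at hm ⊢
    refine ⟨?_, ih hm.2 (by simpa [apply] using hn)⟩
    intro b hb
    rw [head?_scanl] at hb
    exact hm.1 b (by rw [head?_scanl]; exact hb)

lemma isReverse_symm {τ τ' : S → S} (h : IsReverse τ τ') : IsReverse τ' τ := by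
  intro P Q hPQ
  exact (h Q P hPQ.symm).symm

lemma isReverse_unique {τ τ' τ'' : S → S} (h' : IsReverse τ τ') (h'' : IsReverse τ τ'') :
    τ' = τ'' := by
  funext Q
  by_cases hq : τ' Q = Q
  · by_contra hne
    -- hne : ¬ τ' Q = τ'' Q
    have hPQ : τ'' Q ≠ Q := fun h => hne (hq.trans h.symm)
    have hτ : τ (τ'' Q) = Q := (h'' (τ'' Q) Q hPQ).2 rfl
    exact hne ((h' (τ'' Q) Q hPQ).1 hτ)
  · have hτ : τ (τ' Q) = Q := (h' (τ' Q) Q hq).2 rfl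
    exact ((h'' (τ' Q) Q hq).1 hτ).symm

lemma count_pair_le_one {l : List (S → S)} (hnd : l.Nodup)
    (hc : ∀ τ ∈ l, ∀ τ' ∈ l, ¬ IsReverse τ τ') {τ τ' : S → S} (hr : IsReverse τ τ')
    (hne : τ ≠ τ') : l.count τ + l.count τ' ≤ 1 := by
  by_cases h1 : τ ∈ l
  · by_cases h2 : τ' ∈ l
    · exact absurd hr (hc τ h1 τ' h2)
    · have : l.count τ' = 0 := List.count_eq_zero.2 h2
      have := List.nodup_iff_count_le_one.1 hnd τ
      omega
  · have : l.count τ = 0 := List.count_eq_zero.2 h1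
    have := List.nodup_iff_count_le_one.1 hnd τ'
    omega


end Media

open Media

/-- Lemma 5.5: if `V = Sm`, `W = Vn` for concise messages `m`, `n` and `S = Wp`
where `p` is concise for `W` or empty, then every token occurs at most once in
the closed message `mnp`; in particular, each pair of mutually reverse tokens
occurs at most once in `mnp`. -/
theorem closed_triangle_nodup {S : Type u} {T : Set (S → S)} (hM : IsMedium T)
    (s v w : S) (m n p : List (S → S))
    (hm : ∀ τ ∈ m, τ ∈ T) (hn : ∀ τ ∈ n, τ ∈ T) (hp : ∀ τ ∈ p, τ ∈ T)
    (hmc : Concise s m) (hsm : apply s m = v)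
    (hnc : Concise v n) (hvn : apply v n = w)
    (hpc : p = [] ∨ Concise w p) (hwp : apply w p = s) :
    (m ++ n ++ p).Nodup ∧
    ∀ τ τ' : S → S, IsReverse τ τ' →
      (m ++ n ++ p).count τ ≤ 1 ∧ (m ++ n ++ p).count τ' ≤ 1 := by
  -- facts about p in both cases
  have hpSE : StepwiseEffective w p := by
    rcases hpc with h | h
    · subst h; simp [StepwiseEffective, produced, List.scanl, List.Chain', List.isChain_singleton]
    · exact h.1
  have hpCons : Consistent p := by
    rcases hpc with h | h
    · subst h; intro τ hτ; simp at hτ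
    · exact h.2.1
  have hpNodup : p.Nodup := by
    rcases hpc with h | h
    · subst h; simp
    · exact h.2.2
  set L : List (S → S) := m ++ n ++ p with hL
  have happ_mn : apply s (m ++ n) = w := by
    rw [apply, List.foldl_append, ← apply, ← apply, hsm, hvn]
  have hSE : StepwiseEffective s L := by
    apply se_append
    · exact se_append hmc.1 (by rw [hsm]; exact hnc.1)
    · rw [happ_mn]; exact hpSE
  have hClosed : Closed s L := by
    refine ⟨hSE, ?_⟩
    rw [apply, List.foldl_append, ← apply, ← apply, happ_mn, hwp]
  have htok : ∀ τ ∈ L, τ ∈ T := by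
    intro τ hτ
    rw [hL, List.mem_append, List.mem_append] at hτ
    rcases hτ with (h | h) | h
    · exact hm τ h
    · exact hn τ h
    · exact hp τ h
  obtain ⟨f, hinv, hfix, hrev⟩ := hM.2.2.2.2 s L htok hClosed
  -- a token in L is never its own reverse
  have hself : ∀ σ ∈ L, ¬ IsReverse σ σ := by
    intro σ hσ
    rw [hL, List.mem_append, List.mem_append] at hσ
    rcases hσ with (h | h) | h
    · exact hmc.2.1 σ h σ h
    · exact hnc.2.1 σ h σ h
    · exact hpCons σ h σ h
  -- two distinct indices with equal values give count ≥ 2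
  have two_le : ∀ i j : Fin L.length, i ≠ j → L.get i = L.get j →
      2 ≤ L.count (L.get i) := by
    intro i j hij hgg
    rw [← List.duplicate_iff_two_le_count, List.duplicate_iff_exists_distinct_get]
    rcases lt_or_gt_of_ne hij with h | h
    · exact ⟨i, j, h, rfl, hgg⟩
    · exact ⟨j, i, h, hgg, rfl⟩
  have key : L.Nodup := by
    by_contra hnd
    rw [List.nodup_iff_injective_get, Function.not_injective_iff] at hnd
    obtain ⟨i, j, hgg, hij⟩ := hnd
    set τ : S → S := L.get i with hτ
    set τ' : S → S := L.get (f i) with hτ'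
    have hr : IsReverse τ τ' := hrev i
    have hrj : IsReverse τ (L.get (f j)) := by rw [hgg]; exact hrev j
    have hfj : L.get (f j) = τ' := isReverse_unique hrj hr
    have hmemτ : τ ∈ L := by rw [hτ]; exact List.get_mem L i
    have hne : τ ≠ τ' := fun h => hself τ hmemτ (h ▸ hr)
    have h2τ : 2 ≤ L.count τ := two_le i j hij hgg
    have h2τ' : 2 ≤ L.count τ' := by
      have := two_le (f i) (f j) (fun h => hij (hinv.injective h)) (by rw [hfj])
      rwa [← hτ'] at this
    have cm := count_pair_le_one hmc.2.2 hmc.2.1 hr hne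
    have cn := count_pair_le_one hnc.2.2 hnc.2.1 hr hne
    have cp := count_pair_le_one hpNodup hpCons hr hne
    have eτ : L.count τ = m.count τ + n.count τ + p.count τ := by
      rw [hL]; simp [List.count_append]; omega
    have eτ' : L.count τ' = m.count τ' + n.count τ' + p.count τ' := by
      rw [hL]; simp [List.count_append]; omega
    omega
  refine ⟨key, fun τ τ' _ => ⟨?_, ?_⟩⟩
  · exact List.nodup_iff_count_le_one.1 key τ
  · exact List.nodup_iff_count_le_one.1 key τ'
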